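/- (Lemma 3.1) If V = ⊕_{n∈ℤ} V_n is a ℤ-graded L-module of the intermediate series and the operator t1^1 ∘ t1^{-1} on V is degenerate (kills some nonzero homogeneous vector), then every V_n is a trivial L-submodule, i.e., L.V = 0. -/

import Mathlib

/-- (Lemma 3.1) If the operator `t1^1 ∘ t1^{-1}` on `V` is degenerate (kills some nonzero homogeneous vector), then every `V_n` is a trivial `L`-submodule, i.e. `L.V = 0`. -/
theorem stmt_11_thm
    (q : ℂ) (hq0 : q ≠ 0) (hq : ∀ n : ℕ, 0 < n → q ^ n ≠ 1)
    (V : Type*) [AddCommGroup V] [Module ℂ V]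
    (Vn : ℤ → Submodule ℂ V) (hdirect : DirectSum.IsInternal Vn)
    (ρ : ℤ × ℤ → V →ₗ[ℂ] V)
    (hbr : ∀ p r : ℤ × ℤ, p ≠ (0, 0) → r ≠ (0, 0) →
      ρ p ∘ₗ ρ r - ρ r ∘ₗ ρ p =
        if p + r = (0, 0) then 0
        else (q ^ (p.2 * r.1) - q ^ (p.1 * r.2)) • ρ (p + r))
    (hgr : ∀ (p : ℤ × ℤ) (n : ℤ), p ≠ (0, 0) → ∀ v ∈ Vn n, ρ p v ∈ Vn (n + p.1))
    (hdim : ∀ n : ℤ, Module.rank ℂ (Vn n) ≤ 1)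
    (hdeg : ∃ (j : ℤ) (v : V), v ∈ Vn j ∧ v ≠ 0 ∧ ρ (1, 0) (ρ (-1, 0) v) = 0) :
    ∀ p : ℤ × ℤ, p ≠ (0, 0) → ρ p = 0 := by
  classical
  -- distinct integer powers of q are distinct
  have hqd : ∀ a b : ℤ, a ≠ b → q ^ a - q ^ b ≠ 0 := by
    intro a b hab h
    have h1 : q ^ a = q ^ b := sub_eq_zero.mp h
    have h2 : q ^ (a - b) = 1 := by
      rw [zpow_sub₀ hq0, h1, div_self (zpow_ne_zero _ hq0)]
    have h3 : a - b ≠ 0 := sub_ne_zero.mpr hab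
    have h4 : q ^ (((a - b).natAbs : ℤ)) = 1 := by
      rcases Int.natAbs_eq (a - b) with he | he
      · rw [← he]; exact h2
      · rw [show (((a - b).natAbs : ℤ)) = -(a - b) by omega, zpow_neg, h2, inv_one]
    rw [zpow_natCast] at h4
    exact hq _ (Int.natAbs_pos.mpr h3) h4
  -- any operator preserving a piece acts on it as a scalar
  have hscal : ∀ (k : ℤ) (g : V →ₗ[ℂ] V), (∀ v ∈ Vn k, g v ∈ Vn k) →
      ∃ c : ℂ, ∀ v ∈ Vn k, g v = c • v := by
    intro k g hg
    obtain ⟨w, hw⟩ := rank_le_one_iff.mp (hdim k)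
    obtain ⟨c, hc⟩ := hw ⟨g w, hg w w.2⟩
    refine ⟨c, fun v hv => ?_⟩
    obtain ⟨a, ha⟩ := hw ⟨v, hv⟩
    have ha' : a • (w : V) = v := congrArg Subtype.val ha
    have hc' : c • (w : V) = g w := congrArg Subtype.val hc
    rw [← ha', map_smul, ← hc', smul_comm]
  -- an operator vanishing on all pieces is zero
  have hzero : ∀ g : V →ₗ[ℂ] V, (∀ (k : ℤ), ∀ v ∈ Vn k, g v = 0) → g = 0 := by
    intro g hg
    have hle : iSup Vn ≤ LinearMap.ker g :=
      iSup_le fun k v hv => LinearMap.mem_ker.mpr (hg k v hv)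
    ext v
    have hv : v ∈ iSup Vn := by
      rw [hdirect.submodule_iSup_eq_top]; exact Submodule.mem_top
    simpa using hle hv
  -- bracket relation with explicit components
  have bracket : ∀ a b c d e f : ℤ, (a, b) ≠ ((0 : ℤ), (0 : ℤ)) →
      (c, d) ≠ ((0 : ℤ), (0 : ℤ)) → (e, f) ≠ ((0 : ℤ), (0 : ℤ)) →
      a + c = e → b + d = f →
      ρ (a, b) ∘ₗ ρ (c, d) - ρ (c, d) ∘ₗ ρ (a, b)
        = (q ^ (b * c) - q ^ (a * d)) • ρ (e, f) := by
    intro a b c d e f h1 h2 h3 he hf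
    have h := hbr (a, b) (c, d) h1 h2
    rw [Prod.mk_add_mk, he, hf, if_neg h3] at h
    simpa using h
  -- if one factor is zero and the coefficient is nonzero, the target is zero
  have vanish : ∀ a b c d e f : ℤ, (a, b) ≠ ((0 : ℤ), (0 : ℤ)) →
      (c, d) ≠ ((0 : ℤ), (0 : ℤ)) → (e, f) ≠ ((0 : ℤ), (0 : ℤ)) →
      a + c = e → b + d = f → ρ (a, b) = 0 → b * c ≠ a * d →
      ρ (e, f) = 0 := by
    intro a b c d e f h1 h2 h3 he hf hz hne
    have h := bracket a b c d e f h1 h2 h3 he hf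
    rw [hz] at h
    simp only [LinearMap.zero_comp, LinearMap.comp_zero, sub_zero] at h
    exact ((smul_eq_zero.mp h.symm).resolve_left (hqd _ _ hne))
  -- E and F commute
  have hEF : ρ ((1 : ℤ), (0 : ℤ)) ∘ₗ ρ (-1, 0) = ρ (-1, 0) ∘ₗ ρ (1, 0) := by
    have h := hbr (1, 0) (-1, 0) (by norm_num [Prod.ext_iff]) (by norm_num [Prod.ext_iff])
    rw [if_pos (by norm_num [Prod.ext_iff])] at h
    exact sub_eq_zero.mp h
  have hEF' : ∀ x : V, ρ ((1 : ℤ), (0 : ℤ)) (ρ (-1, 0) x) = ρ (-1, 0) (ρ (1, 0) x) := by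
    intro x
    have := LinearMap.ext_iff.mp hEF x
    simpa using this
  -- T = E∘F maps each piece to itself
  have hTmap : ∀ (k : ℤ) (v : V), v ∈ Vn k → ρ ((1 : ℤ), (0 : ℤ)) (ρ (-1, 0) v) ∈ Vn k := by
    intro k v hv
    have h1 : ρ ((-1 : ℤ), (0 : ℤ)) v ∈ Vn (k + (-1)) :=
      hgr (-1, 0) k (by norm_num [Prod.ext_iff]) v hv
    have h2 : ρ ((1 : ℤ), (0 : ℤ)) (ρ (-1, 0) v) ∈ Vn (k + (-1) + 1) :=
      hgr (1, 0) (k + (-1)) (by norm_num [Prod.ext_iff]) _ h1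
    rwa [show k + (-1 : ℤ) + 1 = k by ring] at h2
  -- base case of the induction
  obtain ⟨j, v0, hv0, hv0ne, hkill⟩ := hdeg
  have baseP : ∀ v ∈ Vn j, ρ ((1 : ℤ), (0 : ℤ)) (ρ (-1, 0) v) = 0 := by
    obtain ⟨c, hc⟩ := hscal j (ρ ((1 : ℤ), (0 : ℤ)) ∘ₗ ρ (-1, 0))
      (fun v hv => by simpa using hTmap j v hv)
    have hc0 : c = 0 := by
      have t := hc v0 hv0
      simp only [LinearMap.comp_apply] at t
      rw [hkill] at t
      exact (smul_eq_zero.mp t.symm).resolve_right hv0ne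
    intro v hv
    have t := hc v hv
    simp only [LinearMap.comp_apply] at t
    rw [t, hc0, zero_smul]
  -- upward propagation
  have stepUp : ∀ k : ℤ, (∀ v ∈ Vn k, ρ ((1 : ℤ), (0 : ℤ)) (ρ (-1, 0) v) = 0) →
      ∀ v ∈ Vn (k + 1), ρ ((1 : ℤ), (0 : ℤ)) (ρ (-1, 0) v) = 0 := by
    intro k hk
    obtain ⟨c, hc⟩ := hscal (k + 1) (ρ ((1 : ℤ), (0 : ℤ)) ∘ₗ ρ (-1, 0))
      (fun v hv => by simpa using hTmap (k + 1) v hv)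
    intro v hv
    have h1 : ρ ((-1 : ℤ), (0 : ℤ)) v ∈ Vn k := by
      have h' : ρ ((-1 : ℤ), (0 : ℤ)) v ∈ Vn (k + 1 + (-1)) :=
        hgr (-1, 0) (k + 1) (by norm_num [Prod.ext_iff]) v hv
      rwa [show k + 1 + (-1 : ℤ) = k by ring] at h'
    have h2 : ρ ((-1 : ℤ), (0 : ℤ)) (ρ (1, 0) (ρ (-1, 0) v)) = 0 := by
      rw [← hEF' (ρ (-1, 0) v)]
      exact hk _ h1
    have h3 : ρ ((1 : ℤ), (0 : ℤ)) (ρ ((-1 : ℤ), (0 : ℤ)) (ρ ((1 : ℤ), (0 : ℤ)) (ρ (-1, 0) v))) = 0 := by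
      rw [h2, map_zero]
    have t1 := hc v hv
    have t2 := hc _ (hTmap (k + 1) v hv)
    simp only [LinearMap.comp_apply] at t1 t2
    have h4 : (0 : V) = c • (c • v) := by
      calc (0 : V) = ρ ((1 : ℤ), (0 : ℤ)) (ρ ((-1 : ℤ), (0 : ℤ)) (ρ ((1 : ℤ), (0 : ℤ)) (ρ (-1, 0) v))) := h3.symm
        _ = c • (ρ ((1 : ℤ), (0 : ℤ)) (ρ (-1, 0) v)) := t2
        _ = c • (c • v) := by rw [t1]
    have h5 : (c * c) • v = 0 := by rw [mul_smul]; exact h4.symm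
    rcases smul_eq_zero.mp h5 with hcz | hvz
    · rw [t1, mul_self_eq_zero.mp hcz, zero_smul]
    · rw [hvz, map_zero, map_zero]
  -- downward propagation
  have stepDown : ∀ k : ℤ, (∀ v ∈ Vn k, ρ ((1 : ℤ), (0 : ℤ)) (ρ (-1, 0) v) = 0) →
      ∀ v ∈ Vn (k - 1), ρ ((1 : ℤ), (0 : ℤ)) (ρ (-1, 0) v) = 0 := by
    intro k hk
    obtain ⟨c, hc⟩ := hscal (k - 1) (ρ ((1 : ℤ), (0 : ℤ)) ∘ₗ ρ (-1, 0))
      (fun v hv => by simpa using hTmap (k - 1) v hv)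
    intro v hv
    have h1 : ρ ((1 : ℤ), (0 : ℤ)) v ∈ Vn k := by
      have h' : ρ ((1 : ℤ), (0 : ℤ)) v ∈ Vn (k - 1 + 1) :=
        hgr (1, 0) (k - 1) (by norm_num [Prod.ext_iff]) v hv
      rwa [show k - 1 + 1 = k by ring] at h'
    have h3 : ρ ((1 : ℤ), (0 : ℤ)) (ρ ((-1 : ℤ), (0 : ℤ)) (ρ ((1 : ℤ), (0 : ℤ)) (ρ (-1, 0) v))) = 0 := by
      rw [hEF' v]
      rw [hEF' (ρ ((-1 : ℤ), (0 : ℤ)) (ρ ((1 : ℤ), (0 : ℤ)) v))]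
      rw [hk (ρ ((1 : ℤ), (0 : ℤ)) v) h1, map_zero]
    have t1 := hc v hv
    have t2 := hc _ (hTmap (k - 1) v hv)
    simp only [LinearMap.comp_apply] at t1 t2
    have h4 : (0 : V) = c • (c • v) := by
      calc (0 : V) = ρ ((1 : ℤ), (0 : ℤ)) (ρ ((-1 : ℤ), (0 : ℤ)) (ρ ((1 : ℤ), (0 : ℤ)) (ρ (-1, 0) v))) := h3.symm
        _ = c • (ρ ((1 : ℤ), (0 : ℤ)) (ρ (-1, 0) v)) := t2
        _ = c • (c • v) := by rw [t1]
    have h5 : (c * c) • v = 0 := by rw [mul_smul]; exact h4.symm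
    rcases smul_eq_zero.mp h5 with hcz | hvz
    · rw [t1, mul_self_eq_zero.mp hcz, zero_smul]
    · rw [hvz, map_zero, map_zero]
  -- T ≡ 0 on every piece
  have hT : ∀ (k : ℤ), ∀ v ∈ Vn k, ρ ((1 : ℤ), (0 : ℤ)) (ρ (-1, 0) v) = 0 := by
    have key : ∀ i : ℤ, ∀ v ∈ Vn (j + i), ρ ((1 : ℤ), (0 : ℤ)) (ρ (-1, 0) v) = 0 := by
      intro i
      induction i using Int.induction_on with
      | zero => simpa using baseP
      | succ n ih =>
          intro v hv
          exact stepUp (j + n) ih v (by rwa [show j + n + 1 = j + ((n : ℤ) + 1) by ring])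
      | pred n ih =>
          intro v hv
          exact stepDown (j + -(n : ℤ)) ih v
            (by rwa [show j + -(n : ℤ) - 1 = j + (-(n : ℤ) - 1) by ring])
    intro k v hv
    exact key (k - j) v (by rwa [show j + (k - j) = k by ring])
  have hT' : ∀ (k : ℤ), ∀ v ∈ Vn k, ρ ((-1 : ℤ), (0 : ℤ)) (ρ (1, 0) v) = 0 := by
    intro k v hv
    rw [← hEF' v]
    exact hT k v hv
  -- all ρ (0, s) vanish
  have hB : ∀ s : ℤ, s ≠ 0 → ρ ((0 : ℤ), s) = 0 := by
    intro s hs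
    have hns : ((0 : ℤ), s) ≠ ((0 : ℤ), (0 : ℤ)) := by simp [Prod.ext_iff, hs]
    have hrelE := bracket 0 s 1 0 1 s hns (by norm_num [Prod.ext_iff])
      (by norm_num [Prod.ext_iff]) (by ring) (by ring)
    -- hrelE : ρ(0,s)∘E − E∘ρ(0,s) = (q^(s*1) − q^(0*0)) • ρ(1,s)
    simp only [mul_one, mul_zero, zero_mul, zpow_zero] at hrelE
    have hrelE' := LinearMap.ext_iff.mp hrelE
    have hco : q ^ s - 1 ≠ 0 := by
      have := hqd s 0 hs
      simpa using this
    apply hzero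
    intro k v hv
    have hBmap : ∀ (m : ℤ), ∀ u ∈ Vn m, ρ ((0 : ℤ), s) u ∈ Vn m := by
      intro m u hu
      have h' : ρ ((0 : ℤ), s) u ∈ Vn (m + 0) := hgr (0, s) m hns u hu
      rwa [add_zero] at h'
    obtain ⟨c0, hc0⟩ := hscal k _ (hBmap k)
    obtain ⟨cm, hcm⟩ := hscal (k - 1) _ (hBmap (k - 1))
    obtain ⟨cp, hcp⟩ := hscal (k + 1) _ (hBmap (k + 1))
    have hFv : ρ ((-1 : ℤ), (0 : ℤ)) v ∈ Vn (k - 1) := by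
      have h' : ρ ((-1 : ℤ), (0 : ℤ)) v ∈ Vn (k + (-1)) :=
        hgr (-1, 0) k (by norm_num [Prod.ext_iff]) v hv
      rwa [show k + (-1 : ℤ) = k - 1 by ring] at h'
    have hEv : ρ ((1 : ℤ), (0 : ℤ)) v ∈ Vn (k + 1) :=
      hgr (1, 0) k (by norm_num [Prod.ext_iff]) v hv
    -- a1 : ρ(1,s)(F v) = 0
    have a1 : ρ ((1 : ℤ), s) (ρ ((-1 : ℤ), (0 : ℤ)) v) = 0 := by
      have h := hrelE' (ρ ((-1 : ℤ), (0 : ℤ)) v)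
      simp only [LinearMap.sub_apply, LinearMap.comp_apply, LinearMap.smul_apply] at h
      rw [hT k v hv, map_zero, hcm _ hFv, map_smul, hT k v hv, smul_zero, sub_zero] at h
      exact (smul_eq_zero.mp h.symm).resolve_left hco
    -- a2 : F(ρ(1,s) v) = 0
    have a2 : ρ ((-1 : ℤ), (0 : ℤ)) (ρ ((1 : ℤ), s) v) = 0 := by
      have h := hrelE' v
      simp only [LinearMap.sub_apply, LinearMap.comp_apply, LinearMap.smul_apply] at h
      have h2 : (q ^ s - 1) • ρ ((-1 : ℤ), (0 : ℤ)) (ρ ((1 : ℤ), s) v) = 0 := by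
        rw [← map_smul, ← h, map_sub, hcp _ hEv, hc0 v hv]
        simp only [map_smul]
        rw [hT' k v hv]
        simp
      exact (smul_eq_zero.mp h2).resolve_left hco
    -- main relation
    have hmain := bracket 1 s (-1) 0 0 s (by simp [Prod.ext_iff]) (by norm_num [Prod.ext_iff])
      hns (by ring) (by ring)
    have h := LinearMap.ext_iff.mp hmain v
    simp only [LinearMap.sub_apply, LinearMap.comp_apply, LinearMap.smul_apply] at h
    rw [a1, a2, sub_zero] at h
    -- h : 0 = (q^(s * -1) - q^(1*0)) • ρ(0,s) v
    have hco2 : q ^ (s * (-1)) - q ^ ((1 : ℤ) * 0) ≠ 0 := hqd _ _ (by omega)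
    exact (smul_eq_zero.mp h.symm).resolve_left hco2
  -- ρ(1,s) = 0 and ρ(-1,s) = 0 for s ≠ 0
  have hE1 : ∀ s : ℤ, s ≠ 0 → ρ ((1 : ℤ), s) = 0 := by
    intro s hs
    exact vanish 0 s 1 0 1 s (by simp [Prod.ext_iff, hs]) (by norm_num [Prod.ext_iff])
      (by norm_num [Prod.ext_iff]) (by ring) (by ring) (hB s hs) (by omega)
  have hF1 : ∀ s : ℤ, s ≠ 0 → ρ ((-1 : ℤ), s) = 0 := by
    intro s hs
    exact vanish 0 s (-1) 0 (-1) s (by simp [Prod.ext_iff, hs]) (by norm_num [Prod.ext_iff])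
      (by norm_num [Prod.ext_iff]) (by ring) (by ring) (hB s hs) (by omega)
  have h21 : ρ ((2 : ℤ), (1 : ℤ)) = 0 :=
    vanish 1 1 1 0 2 1 (by norm_num [Prod.ext_iff]) (by norm_num [Prod.ext_iff])
      (by norm_num [Prod.ext_iff]) (by ring) (by ring) (hE1 1 one_ne_zero) (by omega)
  have h2m1 : ρ ((-2 : ℤ), (1 : ℤ)) = 0 :=
    vanish (-1) 1 (-1) 0 (-2) 1 (by norm_num [Prod.ext_iff]) (by norm_num [Prod.ext_iff])
      (by norm_num [Prod.ext_iff]) (by ring) (by ring) (hF1 1 one_ne_zero) (by omega)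
  have hE : ρ ((1 : ℤ), (0 : ℤ)) = 0 :=
    vanish 2 1 (-1) (-1) 1 0 (by norm_num [Prod.ext_iff]) (by norm_num [Prod.ext_iff])
      (by norm_num [Prod.ext_iff]) (by ring) (by ring) h21 (by omega)
  -- final case split
  intro p hp
  obtain ⟨m, n⟩ := p
  by_cases hn : n = 0
  · subst hn
    have hm : m ≠ 0 := by
      intro h
      exact hp (by simp [h])
    exact vanish 0 1 m (-1) m 0 (by norm_num [Prod.ext_iff]) (by norm_num [Prod.ext_iff])
      (by simp [Prod.ext_iff, hm]) (by ring) (by ring) (hB 1 one_ne_zero) (by omega)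
  · exact vanish 1 0 (m - 1) n m n (by norm_num [Prod.ext_iff]) (by simp [Prod.ext_iff, hn])
      (by simp [Prod.ext_iff, hn]) (by ring) (by ring) hE (by omega)
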